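/- The map sending a rooted planar tree τ with k leaves v_1 < ... < v_k (in lexicographic order) to the pair of vectors (ℓ, b), where ℓ_i = |v_i| is the generation of the i-th leaf and b_i = |v_i ∧ v_{i+1}| is the generation of the most recent common ancestor of consecutive leaves, is a bijection from the set of planar trees with k leaves onto the set {(ℓ, b) ∈ ℕ^k × ℕ^{k-1} : b_i < min(ℓ_i, ℓ_{i+1}) for all i < k}. -/

import Mathlib

open scoped Classical

noncomputable section

/-- A (finite) rooted planar tree, encoded as a prefix-closed finite set of words over ℕ
containing the root `[]`, in which the children of every vertex are indexed by
consecutive integers `0, …, d-1`. -/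
def IsPlanarTree (τ : Finset (List ℕ)) : Prop :=
  [] ∈ τ ∧ (∀ v w : List ℕ, v <+: w → w ∈ τ → v ∈ τ) ∧
    ∀ v : List ℕ, ∃ d : ℕ, ∀ i : ℕ, v ++ [i] ∈ τ ↔ i < d

/-- The leaves of a set of words: its maximal elements for the prefix order
(for a planar tree, exactly the vertices with out-degree 0). -/
def leavesOf (s : Finset (List ℕ)) : Finset (List ℕ) :=
  s.filter fun v => ∀ w ∈ s, v <+: w → w = v

/-- Length of the longest common prefix of two words (generation of the MRCA). -/
def commonPrefixLen : List ℕ → List ℕ → ℕ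
  | a :: v, b :: w => if a = b then commonPrefixLen v w + 1 else 0
  | _, _ => 0

/-- The `i`-th leaf of a tree with `k` leaves, in lexicographic order. -/
def leafVec (τ : Finset (List ℕ)) {k : ℕ} (h : (leavesOf τ).card = k) (i : Fin k) :
    List ℕ :=
  ((leavesOf τ).orderIsoOfFin h i : List ℕ)

def List.get? {α : Type*} (l : List α) (n : ℕ) : Option α := l[n]?

@[simp] theorem List.get?_eq_getElem?' {α : Type*} (l : List α) (n : ℕ) : l.get? n = l[n]? := rfl

theorem List.get?_eq_some {α : Type*} {l : List α} {n : ℕ} {a : α} :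
    l.get? n = some a ↔ ∃ h : n < l.length, l.get ⟨n, h⟩ = a := by
  simp [List.getElem?_eq_some_iff]

theorem List.get?_eq_get {α : Type*} {l : List α} {n : ℕ} (h : n < l.length) :
    l.get? n = some (l.get ⟨n, h⟩) := by simp [h]

theorem List.get?_eq_none {α : Type*} {l : List α} {n : ℕ} :
    l.get? n = none ↔ l.length ≤ n := by simp

theorem List.get?_append {α : Type*} {l₁ l₂ : List α} {n : ℕ} (h : n < l₁.length) :
    (l₁ ++ l₂).get? n = l₁.get? n := by simp [List.getElem?_append_left h]

theorem List.get?_append_right {α : Type*} {l₁ l₂ : List α} {n : ℕ} (h : l₁.length ≤ n) :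
    (l₁ ++ l₂).get? n = l₂.get? (n - l₁.length) := by simp [List.getElem?_append_right h]

theorem List.get?_take {α : Type*} {l : List α} {m n : ℕ} (h : m < n) :
    (l.take n).get? m = l.get? m := by simp [List.getElem?_take_of_lt h]

theorem List.get?_drop {α : Type*} (L : List α) (i j : ℕ) :
    (L.drop i).get? j = L.get? (i + j) := by simp [List.getElem?_drop]

theorem List.get?_mem {α : Type*} {l : List α} {n : ℕ} {a : α} (h : l.get? n = some a) :
    a ∈ l := List.mem_of_getElem? h

theorem List.mem_iff_get? {α : Type*} {a : α} {l : List α} :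
    a ∈ l ↔ ∃ n, l.get? n = some a := by simp [List.mem_iff_getElem?]

theorem List.get?_cons_succ {α : Type*} {a : α} {l : List α} {n : ℕ} :
    (a :: l).get? (n + 1) = l.get? n := rfl

theorem List.getD_eq_get? {α : Type*} (l : List α) (n : ℕ) (d : α) :
    l.getD n d = (l.get? n).getD d := by simp [List.getD_eq_getElem?_getD]

namespace PT

/-! ### List lemmas -/

lemma lex_append (t : List ℕ) {u w : List ℕ} (h : List.Lex (· < ·) u w) :
    List.Lex (· < ·) (t ++ u) (t ++ w) := by
  induction t with
  | nil => exact h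
  | cons a t ih => exact List.Lex.cons ih

lemma decomp {u : List ℕ} {p a : ℕ} (h : u.get? p = some a) :
    u = u.take p ++ a :: u.drop (p + 1) := by
  obtain ⟨hp, hg⟩ := List.get?_eq_some.1 h
  conv_lhs => rw [← List.take_append_drop p u]
  rw [List.drop_eq_getElem_cons hp]
  simp [List.get_eq_getElem] at hg
  rw [hg]

lemma lt_of_diverge {u w : List ℕ} {p a c : ℕ} (ht : u.take p = w.take p)
    (ha : u.get? p = some a) (hc : w.get? p = some c) (hac : a < c) : u < w := by
  have hu := decomp ha
  have hw := decomp hc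
  rw [hu, hw, ht]
  exact lex_append _ (List.Lex.rel hac)

lemma le_of_lt_agree {u w : List ℕ} {p a c : ℕ} (ht : u.take p = w.take p)
    (ha : u.get? p = some a) (hc : w.get? p = some c) (h : u < w) : a ≤ c := by
  by_contra hac
  exact absurd (lt_of_diverge ht.symm hc ha (by omega)) (asymm h)

/-- prefix characterization of `u ++ [a] <+: w` -/
lemma append_singleton_prefix {u w : List ℕ} {a : ℕ} :
    u ++ [a] <+: w ↔ w.take u.length = u ∧ w.get? u.length = some a := by
  constructor
  · intro h
    have hu : u <+: w := (List.prefix_append u [a]).trans h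
    have hlen : u.length < w.length := by
      have := h.length_le; simp at this; omega
    constructor
    · exact (List.prefix_iff_eq_take.1 hu).symm
    · obtain ⟨t, rfl⟩ := h
      rw [List.append_assoc, List.get?_append_right (le_refl _)]
      simp
  · rintro ⟨h1, h2⟩
    have := decomp h2
    rw [h1] at this
    exact ⟨w.drop (u.length + 1), by rw [this]; simp⟩

/-! ### commonPrefixLen lemmas -/

lemma cpl_le_left : ∀ u w : List ℕ, commonPrefixLen u w ≤ u.length
  | [], _ => by simp [commonPrefixLen]
  | _ :: _, [] => by simp [commonPrefixLen]
  | a :: u, b :: w => by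
    rw [commonPrefixLen]
    split
    · simpa using cpl_le_left u w
    · simp

lemma cpl_comm : ∀ u w : List ℕ, commonPrefixLen u w = commonPrefixLen w u
  | [], [] => rfl
  | [], _ :: _ => rfl
  | _ :: _, [] => rfl
  | a :: u, b :: w => by
    rw [commonPrefixLen, commonPrefixLen]
    rcases eq_or_ne a b with h | h
    · simp [h, cpl_comm u w]
    · simp [h, Ne.symm h]

lemma take_cpl : ∀ u w : List ℕ,
    u.take (commonPrefixLen u w) = w.take (commonPrefixLen u w)
  | [], _ => by simp [commonPrefixLen]
  | _ :: _, [] => by simp [commonPrefixLen]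
  | a :: u, b :: w => by
    rw [commonPrefixLen]
    split
    · next h => simp [h, take_cpl u w]
    · simp

lemma get?_cpl_ne : ∀ u w : List ℕ, u ≠ w →
    u.get? (commonPrefixLen u w) ≠ w.get? (commonPrefixLen u w)
  | [], [], h => absurd rfl h
  | [], b :: w, _ => by simp [commonPrefixLen]
  | a :: u, [], _ => by simp [commonPrefixLen]
  | a :: u, b :: w, h => by
    rw [commonPrefixLen]
    rcases eq_or_ne a b with hab | hab
    · subst hab
      have : u ≠ w := by rintro rfl; exact h rfl
      simpa using get?_cpl_ne u w this
    · rw [if_neg hab]; simpa using hab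

/-- if neither is a prefix of the other, cpl is < both lengths and entries differ. -/
lemma cpl_spec {u w : List ℕ} (h1 : ¬ u <+: w) (h2 : ¬ w <+: u) :
    ∃ a c, commonPrefixLen u w < u.length ∧ commonPrefixLen u w < w.length ∧
      u.get? (commonPrefixLen u w) = some a ∧ w.get? (commonPrefixLen u w) = some c ∧ a ≠ c := by
  have hne : u ≠ w := by rintro rfl; exact h1 List.prefix_rfl
  have hdiff := get?_cpl_ne u w hne
  have hle1 := cpl_le_left u w
  have hle2 : commonPrefixLen u w ≤ w.length := cpl_comm u w ▸ cpl_le_left w u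
  have htk := take_cpl u w
  have hmu : commonPrefixLen u w < u.length := by
    rcases lt_or_eq_of_le hle1 with h | h
    · exact h
    · exfalso
      rcases lt_or_ge (commonPrefixLen u w) w.length with hw | hw
      · apply h1
        rw [List.prefix_iff_eq_take, ← h]
        calc u = u.take (commonPrefixLen u w) := by rw [h]; simp
          _ = w.take (commonPrefixLen u w) := htk
      · exact hdiff (by rw [List.get?_eq_none.2 h.ge, List.get?_eq_none.2 hw])
  have hmw : commonPrefixLen u w < w.length := by
    rcases lt_or_eq_of_le hle2 with h | h
    · exact h
    · exfalso
      apply h2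
      rw [List.prefix_iff_eq_take, ← h]
      exact (by rw [h]; simp : w = w.take (commonPrefixLen u w)).trans htk.symm
  refine ⟨u.get ⟨_, hmu⟩, w.get ⟨_, hmw⟩, hmu, hmw, List.get?_eq_get hmu,
    List.get?_eq_get hmw, ?_⟩
  intro hac
  exact hdiff (by rw [List.get?_eq_get hmu, List.get?_eq_get hmw, hac])

/-- compute cpl when we know agreement below `p` and difference at `p`. -/
lemma cpl_eq : ∀ (p : ℕ) (u w : List ℕ), u.take p = w.take p →
    u.get? p ≠ w.get? p → (∃ a, u.get? p = some a) →
    commonPrefixLen u w = p := by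
  intro p
  induction p with
  | zero =>
    intro u w _ hne hs
    obtain ⟨a, ha⟩ := hs
    match u, w with
    | [], _ => simp at ha
    | x :: u, [] => rfl
    | x :: u, y :: w =>
      rw [commonPrefixLen, if_neg]
      intro h; subst h
      simp at hne
  | succ p ih =>
    intro u w ht hne hs
    obtain ⟨a, ha⟩ := hs
    match u, w with
    | [], _ => simp at ha
    | x :: u, [] => simp at ht
    | x :: u, y :: w =>
      simp only [List.take_succ_cons, List.cons.injEq] at ht
      obtain ⟨rfl, ht2⟩ := ht
      rw [commonPrefixLen, if_pos rfl,
        ih u w ht2 (by simpa using hne) ⟨a, by simpa using ha⟩]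

/-! ### Tree lemmas -/

lemma mem_of_leaf {τ : Finset (List ℕ)} {w : List ℕ} (h : w ∈ leavesOf τ) : w ∈ τ :=
  (Finset.mem_filter.1 h).1

lemma leaf_max {τ : Finset (List ℕ)} {w : List ℕ} (h : w ∈ leavesOf τ) :
    ∀ u ∈ τ, w <+: u → u = w :=
  (Finset.mem_filter.1 h).2

/-- Every vertex of a finite tree extends to a leaf (needs only prefix-closedness-free
    reasoning: works for any finset). -/
lemma exists_leaf {τ : Finset (List ℕ)} :
    ∀ (n : ℕ) (v : List ℕ), v ∈ τ → τ.sup List.length - v.length ≤ n →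
      ∃ w ∈ leavesOf τ, v <+: w := by
  intro n
  induction n with
  | zero =>
    intro v hv hn
    refine ⟨v, Finset.mem_filter.2 ⟨hv, ?_⟩, List.prefix_rfl⟩
    intro w hw hpre
    have h1 : w.length ≤ τ.sup List.length := Finset.le_sup hw
    exact (hpre.eq_of_length (by have := hpre.length_le; omega)).symm
  | succ n ih =>
    intro v hv hn
    by_cases hl : ∀ w ∈ τ, v <+: w → w = v
    · exact ⟨v, Finset.mem_filter.2 ⟨hv, hl⟩, List.prefix_rfl⟩
    · push_neg at hl
      obtain ⟨w, hw, hpre, hne⟩ := hl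
      have hlen : v.length < w.length := by
        rcases lt_or_eq_of_le hpre.length_le with h | h
        · exact h
        · exact absurd (hpre.eq_of_length h).symm hne
      have hwsup : w.length ≤ τ.sup List.length := Finset.le_sup hw
      obtain ⟨u, hu, hpre2⟩ := ih w hw (by omega)
      exact ⟨u, hu, hpre.trans hpre2⟩

lemma exists_leaf' {τ : Finset (List ℕ)} {v : List ℕ} (hv : v ∈ τ) :
    ∃ w ∈ leavesOf τ, v <+: w :=
  exists_leaf _ v hv le_rfl

/-- children are downward closed -/
lemma child_down {τ : Finset (List ℕ)} (hτ : IsPlanarTree τ) {v : List ℕ} {i j : ℕ}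
    (hij : i ≤ j) (hj : v ++ [j] ∈ τ) : v ++ [i] ∈ τ := by
  obtain ⟨d, hd⟩ := hτ.2.2 v
  exact (hd i).2 (lt_of_le_of_lt hij ((hd j).1 hj))

/-! ### leafVec lemmas -/

lemma leafVec_eq_orderEmb (τ : Finset (List ℕ)) {k : ℕ} (h : (leavesOf τ).card = k)
    (i : Fin k) : leafVec τ h i = (leavesOf τ).orderEmbOfFin h i :=
  Finset.coe_orderIsoOfFin_apply _ h i

lemma leafVec_strictMono (τ : Finset (List ℕ)) {k : ℕ} (h : (leavesOf τ).card = k) :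
    StrictMono (leafVec τ h) := by
  have := ((leavesOf τ).orderEmbOfFin h).strictMono
  intro i j hij
  rw [leafVec_eq_orderEmb, leafVec_eq_orderEmb]
  exact this hij

lemma leafVec_mem (τ : Finset (List ℕ)) {k : ℕ} (h : (leavesOf τ).card = k) (i : Fin k) :
    leafVec τ h i ∈ leavesOf τ := by
  rw [leafVec_eq_orderEmb]; exact Finset.orderEmbOfFin_mem _ h i

lemma leafVec_surj (τ : Finset (List ℕ)) {k : ℕ} (h : (leavesOf τ).card = k) {w : List ℕ}
    (hw : w ∈ leavesOf τ) : ∃ i : Fin k, leafVec τ h i = w := by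
  refine ⟨((leavesOf τ).orderIsoOfFin h).symm ⟨w, hw⟩, ?_⟩
  unfold leafVec
  rw [OrderIso.apply_symm_apply]

/-- the smallest leaf -/
lemma leafVec_min (τ : Finset (List ℕ)) {k : ℕ} (h : (leavesOf τ).card = k) (hk : 0 < k)
    {w : List ℕ} (hw : w ∈ leavesOf τ) : leafVec τ h ⟨0, hk⟩ ≤ w := by
  obtain ⟨j, rfl⟩ := leafVec_surj τ h hw
  exact (leafVec_strictMono τ h).monotone (by simp [Fin.le_def])

/-- no leaf lies strictly between consecutive leaves -/
lemma leafVec_between (τ : Finset (List ℕ)) {k : ℕ} (h : (leavesOf τ).card = k) {i : ℕ}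
    (hi : i + 1 < k) {w : List ℕ} (hw : w ∈ leavesOf τ)
    (hlt : leafVec τ h ⟨i, by omega⟩ < w) : leafVec τ h ⟨i + 1, hi⟩ ≤ w := by
  obtain ⟨j, rfl⟩ := leafVec_surj τ h hw
  have h2 : (⟨i, by omega⟩ : Fin k) < j := (leafVec_strictMono τ h).lt_iff_lt.1 hlt
  have h3 : i < j.1 := by simpa [Fin.lt_def] using h2
  exact (leafVec_strictMono τ h).monotone (by simp [Fin.le_def]; omega)

/-- consecutive leaves: divergence data at the cpl position -/
lemma leaf_consec {τ : Finset (List ℕ)} (hτ : IsPlanarTree τ) {k : ℕ}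
    (h : (leavesOf τ).card = k) {i : ℕ} (hi : i + 1 < k) :
    ∃ a c, commonPrefixLen (leafVec τ h ⟨i, by omega⟩) (leafVec τ h ⟨i+1, hi⟩)
        < (leafVec τ h ⟨i, by omega⟩).length ∧
      commonPrefixLen (leafVec τ h ⟨i, by omega⟩) (leafVec τ h ⟨i+1, hi⟩)
        < (leafVec τ h ⟨i+1, hi⟩).length ∧
      (leafVec τ h ⟨i, by omega⟩).get?
          (commonPrefixLen (leafVec τ h ⟨i, by omega⟩) (leafVec τ h ⟨i+1, hi⟩)) = some a ∧
      (leafVec τ h ⟨i+1, hi⟩).get?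
          (commonPrefixLen (leafVec τ h ⟨i, by omega⟩) (leafVec τ h ⟨i+1, hi⟩)) = some c ∧
      a < c := by
  set u := leafVec τ h ⟨i, by omega⟩ with hu
  set w := leafVec τ h ⟨i+1, hi⟩ with hw
  have hlt : u < w := leafVec_strictMono τ h (by simp [Fin.lt_def])
  have h1 : ¬ u <+: w := by
    intro hpre
    have := leaf_max (leafVec_mem τ h ⟨i, by omega⟩) w (mem_of_leaf (leafVec_mem τ h _)) hpre
    exact absurd this.symm (ne_of_lt hlt)
  have h2 : ¬ w <+: u := by
    intro hpre
    have := leaf_max (leafVec_mem τ h ⟨i+1, hi⟩) u (mem_of_leaf (leafVec_mem τ h _)) hpre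
    exact absurd this (ne_of_lt hlt)
  obtain ⟨a, c, hmu, hmw, ha, hc, hac⟩ := cpl_spec h1 h2
  have hle : a ≤ c := le_of_lt_agree (take_cpl u w) ha hc hlt
  exact ⟨a, c, hmu, hmw, ha, hc, lt_of_le_of_ne hle hac⟩

/-! ### Building a tree from leaf data -/

/-- the `i`-th leaf built from generation data `ℓ` and branching data `b`. -/
def bL (ℓ b : ℕ → ℕ) : ℕ → List ℕ
  | 0 => List.replicate (ℓ 0) 0
  | i + 1 => (bL ℓ b i).take (b i) ++
      ((bL ℓ b i).getD (b i) 0 + 1) :: List.replicate (ℓ (i + 1) - b i - 1) 0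

section Build

variable {ℓ b : ℕ → ℕ} {k : ℕ}
variable (H : ∀ i, i + 1 < k → b i < ℓ i ∧ b i < ℓ (i + 1))

include H

lemma bL_length : ∀ i, i < k → (bL ℓ b i).length = ℓ i := by
  intro i
  induction i with
  | zero => intro _; simp [bL]
  | succ i ih =>
    intro hi
    obtain ⟨h1, h2⟩ := H i hi
    have hlen : (bL ℓ b i).length = ℓ i := ih (by omega)
    simp only [bL, List.length_append, List.length_take, List.length_cons,
      List.length_replicate, hlen]
    omega

lemma bL_take_succ (i : ℕ) (hi : i + 1 < k) :
    (bL ℓ b (i + 1)).take (b i) = (bL ℓ b i).take (b i) := by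
  obtain ⟨h1, _⟩ := H i hi
  have hlen : (bL ℓ b i).length = ℓ i := bL_length H i (by omega)
  rw [bL, List.take_append]
  simp [List.take_take, List.length_take, hlen, Nat.le_of_lt h1]

lemma bL_get?_branch (i : ℕ) (hi : i + 1 < k) :
    (bL ℓ b (i + 1)).get? (b i) = some ((bL ℓ b i).getD (b i) 0 + 1) := by
  obtain ⟨h1, _⟩ := H i hi
  have hlen : (bL ℓ b i).length = ℓ i := bL_length H i (by omega)
  rw [bL, List.get?_append_right (by simp only [List.length_take, hlen]; omega)]
  simp [List.length_take, hlen, Nat.le_of_lt h1]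

lemma bL_get?_lt (i p : ℕ) (hi : i + 1 < k) (hp : p < b i) :
    (bL ℓ b (i + 1)).get? p = (bL ℓ b i).get? p := by
  obtain ⟨h1, _⟩ := H i hi
  have hlen : (bL ℓ b i).length = ℓ i := bL_length H i (by omega)
  rw [bL, List.get?_append (by simp only [List.length_take, hlen]; omega)]
  exact List.get?_take hp

lemma bL_get?_gt (i p : ℕ) (hi : i + 1 < k) (hp : b i < p) {e : ℕ}
    (he : (bL ℓ b (i + 1)).get? p = some e) : e = 0 := by
  obtain ⟨h1, _⟩ := H i hi
  have hlen : (bL ℓ b i).length = ℓ i := bL_length H i (by omega)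
  have hl1 : ((bL ℓ b i).take (b i)).length = b i := by
    simp [List.length_take, hlen]; omega
  rw [bL, List.get?_append_right (by omega)] at he
  rw [hl1] at he
  obtain ⟨q, hq⟩ : ∃ q, p - b i = q + 1 := ⟨p - b i - 1, by omega⟩
  rw [hq] at he
  simp only [List.get?_cons_succ] at he
  exact List.eq_of_mem_replicate (List.get?_mem he)

/-- the branch-point values can be decremented by moving to an earlier leaf -/
lemma bL_decrement : ∀ i, i < k → ∀ p c, (bL ℓ b i).get? p = some (c + 1) →
    ∃ i', i' ≤ i ∧ (bL ℓ b i').take p = (bL ℓ b i).take p ∧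
      (bL ℓ b i').get? p = some c := by
  intro i
  induction i with
  | zero =>
    intro _ p c hc
    exact absurd (List.eq_of_mem_replicate (List.get?_mem hc)) (by omega)
  | succ i ih =>
    intro hi p c hc
    rcases lt_trichotomy p (b i) with hp | hp | hp
    · rw [bL_get?_lt H i p hi hp] at hc
      obtain ⟨i', hi', ht, hg⟩ := ih (by omega) p c hc
      refine ⟨i', by omega, ?_, hg⟩
      rw [ht]
      have e1 := bL_take_succ H i hi
      calc (bL ℓ b i).take p = ((bL ℓ b i).take (b i)).take p := by
            rw [List.take_take]; congr 1; omega
        _ = ((bL ℓ b (i+1)).take (b i)).take p := by rw [e1]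
        _ = (bL ℓ b (i+1)).take p := by rw [List.take_take]; congr 1; omega
    · have hbr := bL_get?_branch H i hi
      rw [hp] at hc
      rw [hc] at hbr
      have hval : (bL ℓ b i).getD (b i) 0 = c := by
        injection hbr with h2; omega
      obtain ⟨h1, _⟩ := H i hi
      have hlen : (bL ℓ b i).length = ℓ i := bL_length H i (by omega)
      have hlt : b i < (bL ℓ b i).length := by omega
      have hsome := List.get?_eq_get hlt
      refine ⟨i, by omega, ?_, ?_⟩
      · rw [hp]; exact (bL_take_succ H i hi).symm
      · rw [hp, hsome, ← hval, List.getD_eq_get?, hsome]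
        rfl
    · exact absurd (bL_get?_gt H i p hi hp hc) (by omega)

end Build

section Build2

variable {ℓ b : ℕ → ℕ} {k : ℕ}
variable (H : ∀ i, i + 1 < k → b i < ℓ i ∧ b i < ℓ (i + 1))

include H

/-- any two leaves properly diverge -/
lemma bL_diverge : ∀ m, m < k → ∀ i, i < m →
    ∃ p a c, p < ℓ i ∧ p < ℓ m ∧ (bL ℓ b i).take p = (bL ℓ b m).take p ∧
      (bL ℓ b i).get? p = some a ∧ (bL ℓ b m).get? p = some c ∧ a < c := by
  intro m
  induction m with
  | zero => omega
  | succ m ih =>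
    intro hm i him
    obtain ⟨hb1, hb2⟩ := H m hm
    have hlenm : (bL ℓ b m).length = ℓ m := bL_length H m (by omega)
    have hlenm1 : (bL ℓ b (m+1)).length = ℓ (m+1) := bL_length H (m+1) hm
    have hbrm := bL_get?_branch H m hm
    have htkm := bL_take_succ H m hm
    rcases eq_or_lt_of_le (Nat.lt_succ_iff.1 him) with rfl | him'
    · -- i = m : diverge at position b m
      refine ⟨b i, (bL ℓ b i).getD (b i) 0, (bL ℓ b i).getD (b i) 0 + 1,
        hb1, hb2, htkm.symm, ?_, hbrm, by omega⟩
      have hlt : b i < (bL ℓ b i).length := by omega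
      rw [List.get?_eq_get hlt, List.getD_eq_get?, List.get?_eq_get hlt]
      rfl
    · -- i < m
      obtain ⟨p, a, c, hpi, hpm, ht, ha, hc, hac⟩ := ih (by omega) i him'
      rcases lt_or_ge p (b m) with hp | hp
      · exact ⟨p, a, c, hpi, by omega, by
          rw [ht]
          calc (bL ℓ b m).take p = ((bL ℓ b m).take (b m)).take p := by
                rw [List.take_take]; congr 1; omega
            _ = ((bL ℓ b (m+1)).take (b m)).take p := by rw [htkm]
            _ = (bL ℓ b (m+1)).take p := by rw [List.take_take]; congr 1; omega,
          ha, by rw [bL_get?_lt H m p hm hp]; exact hc, hac⟩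
      · -- p ≥ b m : diverge at position b m instead
        have htb : (bL ℓ b i).take (b m) = (bL ℓ b m).take (b m) := by
          calc (bL ℓ b i).take (b m) = ((bL ℓ b i).take p).take (b m) := by
                rw [List.take_take]; congr 1; omega
            _ = ((bL ℓ b m).take p).take (b m) := by rw [ht]
            _ = (bL ℓ b m).take (b m) := by rw [List.take_take]; congr 1; omega
        have hltm : b m < (bL ℓ b m).length := by omega
        have hlti : b m < (bL ℓ b i).length := by
          have := bL_length H i (by omega)
          have h3 := (List.get?_eq_some.1 ha).1
          omega
        set am := (bL ℓ b m).get ⟨b m, hltm⟩ with ham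
        have hgm : (bL ℓ b m).get? (b m) = some am := List.get?_eq_get hltm
        have hgDm : (bL ℓ b m).getD (b m) 0 = am := by
          rw [List.getD_eq_get?, hgm]; rfl
        set ai := (bL ℓ b i).get ⟨b m, hlti⟩ with hai
        have hgi : (bL ℓ b i).get? (b m) = some ai := List.get?_eq_get hlti
        have hle : ai ≤ am := by
          rcases eq_or_lt_of_le hp with rfl | hp'
          · -- p = b m : ai = a < c = am
            rw [hgi] at ha; rw [hgm] at hc
            injection ha with ha'; injection hc with hc'
            omega
          · -- b m < p : entries at b m agree
            have e1 : (bL ℓ b i).get? (b m) = ((bL ℓ b i).take p).get? (b m) :=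
              (List.get?_take hp').symm
            have e2 : (bL ℓ b m).get? (b m) = ((bL ℓ b m).take p).get? (b m) :=
              (List.get?_take hp').symm
            rw [hgi] at e1; rw [hgm] at e2
            rw [ht] at e1
            rw [← e2] at e1
            injection e1 with e
            omega
        refine ⟨b m, ai, am + 1, by
            have := bL_length H i (by omega); omega, by omega,
          by rw [htb]; exact htkm.symm, hgi, by rw [hbrm, hgDm], by omega⟩

end Build2

section Build3

variable {ℓ b : ℕ → ℕ} {k : ℕ}
variable (H : ∀ i, i + 1 < k → b i < ℓ i ∧ b i < ℓ (i + 1))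

include H

lemma bL_not_prefix {i m : ℕ} (hi : i < k) (hm : m < k) (hne : i ≠ m) :
    ¬ bL ℓ b i <+: bL ℓ b m := by
  intro hpre
  rcases lt_or_gt_of_ne hne with h | h
  · obtain ⟨p, a, c, hpi, hpm, ht, ha, hc, hac⟩ := bL_diverge H m hm i h
    have hplen : p < (bL ℓ b i).length := (List.get?_eq_some.1 ha).1
    obtain ⟨t, heq⟩ := hpre
    rw [← heq, List.get?_append hplen, ha] at hc
    injection hc with hc'; omega
  · obtain ⟨p, a, c, hpm, hpi, ht, ha, hc, hac⟩ := bL_diverge H i hi m h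
    have hplen : p < (bL ℓ b i).length := (List.get?_eq_some.1 hc).1
    obtain ⟨t, heq⟩ := hpre
    rw [← heq, List.get?_append hplen, hc] at ha
    injection ha with ha'; omega

lemma bL_injOn {i m : ℕ} (hi : i < k) (hm : m < k) (heq : bL ℓ b i = bL ℓ b m) :
    i = m := by
  by_contra hne
  exact bL_not_prefix H hi hm hne (heq ▸ List.prefix_rfl)

lemma bL_lt {i m : ℕ} (hm : m < k) (him : i < m) : bL ℓ b i < bL ℓ b m := by
  obtain ⟨p, a, c, _, _, ht, ha, hc, hac⟩ := bL_diverge H m hm i him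
  exact lt_of_diverge ht ha hc hac

end Build3

/-- the tree built from leaf data: all prefixes of the `bL` leaves -/
def bT (ℓ b : ℕ → ℕ) (k : ℕ) : Finset (List ℕ) :=
  (Finset.range k).biUnion fun i => (bL ℓ b i).inits.toFinset

lemma mem_bT {ℓ b : ℕ → ℕ} {k : ℕ} {v : List ℕ} :
    v ∈ bT ℓ b k ↔ ∃ i < k, v <+: bL ℓ b i := by
  simp [bT, Finset.mem_biUnion, List.mem_inits]

section Build4

variable {ℓ b : ℕ → ℕ} {k : ℕ}
variable (H : ∀ i, i + 1 < k → b i < ℓ i ∧ b i < ℓ (i + 1)) (hk : 1 ≤ k)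

include H hk

lemma bT_child_step {v : List ℕ} {j : ℕ} (h : v ++ [j + 1] ∈ bT ℓ b k) :
    v ++ [j] ∈ bT ℓ b k := by
  obtain ⟨i, hi, hpre⟩ := mem_bT.1 h
  obtain ⟨ht, hg⟩ := append_singleton_prefix.1 hpre
  obtain ⟨i', hi', ht', hg'⟩ := bL_decrement H i hi v.length j hg
  refine mem_bT.2 ⟨i', by omega, append_singleton_prefix.2 ⟨?_, hg'⟩⟩
  rw [ht', ht]

lemma bT_child_down {v : List ℕ} {j j' : ℕ} (hjj : j ≤ j') (h : v ++ [j'] ∈ bT ℓ b k) :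
    v ++ [j] ∈ bT ℓ b k := by
  obtain ⟨n, rfl⟩ : ∃ n, j' = j + n := ⟨j' - j, by omega⟩
  clear hjj
  induction n with
  | zero => exact h
  | succ n ih => exact ih (by have := bT_child_step H hk (v := v) (j := j + n); rw [← Nat.add_assoc] at h; exact this h)

lemma bT_planar : IsPlanarTree (bT ℓ b k) := by
  refine ⟨mem_bT.2 ⟨0, by omega, List.nil_prefix⟩, ?_, ?_⟩
  · intro v w hvw hw
    obtain ⟨i, hi, hpre⟩ := mem_bT.1 hw
    exact mem_bT.2 ⟨i, hi, hvw.trans hpre⟩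
  · intro v
    set S : Set ℕ := {j | v ++ [j] ∉ bT ℓ b k} with hS
    have hMbound : ∀ j, v ++ [j] ∈ bT ℓ b k →
        j ≤ (Finset.range k).sup fun i => (bL ℓ b i).sum := by
      intro j hj
      obtain ⟨i, hi, hpre⟩ := mem_bT.1 hj
      have hjmem : j ∈ bL ℓ b i := hpre.subset (List.mem_append.2 (Or.inr (by exact List.mem_singleton.2 rfl)))
      calc j ≤ (bL ℓ b i).sum := List.single_le_sum (fun x _ => Nat.zero_le x) j hjmem
        _ ≤ _ := Finset.le_sup (f := fun i => (bL ℓ b i).sum) (Finset.mem_range.2 hi)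
    have hne : S.Nonempty := by
      refine ⟨((Finset.range k).sup fun i => (bL ℓ b i).sum) + 1, fun hmem => ?_⟩
      have := hMbound _ hmem
      omega
    refine ⟨sInf S, fun j => ⟨fun hj => ?_, fun hj => ?_⟩⟩
    · by_contra hlt
      push_neg at hlt
      exact Nat.sInf_mem hne (bT_child_down H hk hlt hj)
    · by_contra hmem
      exact absurd (Nat.sInf_le hmem) (not_le.2 hj)

end Build4

section Build5

variable {ℓ b : ℕ → ℕ} {k : ℕ}
variable (H : ∀ i, i + 1 < k → b i < ℓ i ∧ b i < ℓ (i + 1)) (hk : 1 ≤ k)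

include H

lemma bL_mem_leaves {i : ℕ} (hi : i < k) : bL ℓ b i ∈ leavesOf (bT ℓ b k) := by
  refine Finset.mem_filter.2 ⟨mem_bT.2 ⟨i, hi, List.prefix_rfl⟩, ?_⟩
  intro w hw hpre
  obtain ⟨m, hm, hpre2⟩ := mem_bT.1 hw
  have him : i = m := by
    by_contra hne
    exact bL_not_prefix H hi hm hne (hpre.trans hpre2)
  subst him
  exact hpre2.eq_of_length (le_antisymm hpre2.length_le hpre.length_le) ▸
    (hpre.eq_of_length (le_antisymm hpre.length_le (hpre2.length_le.trans le_rfl))).symm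

lemma leaves_bT : leavesOf (bT ℓ b k) = (Finset.range k).image (bL ℓ b) := by
  ext w
  constructor
  · intro hw
    obtain ⟨i, hi, hpre⟩ := mem_bT.1 (mem_of_leaf hw)
    have := leaf_max hw (bL ℓ b i) (mem_of_leaf (bL_mem_leaves H hi)) hpre
    exact Finset.mem_image.2 ⟨i, Finset.mem_range.2 hi, this⟩
  · intro hw
    obtain ⟨i, hi, rfl⟩ := Finset.mem_image.1 hw
    exact bL_mem_leaves H (Finset.mem_range.1 hi)

lemma card_leaves_bT : (leavesOf (bT ℓ b k)).card = k := by
  rw [leaves_bT H, Finset.card_image_of_injOn, Finset.card_range]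
  intro i hi m hm heq
  exact bL_injOn H (Finset.mem_range.1 hi) (Finset.mem_range.1 hm) heq

lemma leafVec_bT (h : (leavesOf (bT ℓ b k)).card = k) (i : Fin k) :
    leafVec (bT ℓ b k) h i = bL ℓ b i.1 := by
  have hsm : StrictMono (fun i : Fin k => bL ℓ b i.1) := by
    intro i j hij
    exact bL_lt H j.2 hij
  have hmem : ∀ i : Fin k, bL ℓ b i.1 ∈ leavesOf (bT ℓ b k) := fun i =>
    bL_mem_leaves H i.2
  have := Finset.orderEmbOfFin_unique h hmem hsm
  rw [leafVec_eq_orderEmb, ← this]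

end Build5

/-! ### Reconstruction of an arbitrary planar tree from its leaf data -/

def extF {k : ℕ} (f : Fin k → ℕ) : ℕ → ℕ := fun i => if h : i < k then f ⟨i, h⟩ else 0

lemma take_of_prefix {x w : List ℕ} (h : x <+: w) {p : ℕ} (hp : p ≤ x.length) :
    w.take p = x.take p := by
  obtain ⟨t, rfl⟩ := h
  rw [List.take_append, Nat.sub_eq_zero_of_le hp]
  simp

lemma get?_of_prefix {x w : List ℕ} (h : x <+: w) {p : ℕ} (hp : p < x.length) :
    w.get? p = x.get? p := by
  obtain ⟨t, rfl⟩ := h; exact List.get?_append hp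

lemma reconstruct (l : List ℕ) (p a : ℕ) (h : l.get? p = some a)
    (hz : ∀ q e, p < q → l.get? q = some e → e = 0) :
    l = l.take p ++ a :: List.replicate (l.length - p - 1) 0 := by
  have hp : p < l.length := (List.get?_eq_some.1 h).1
  have hrep : l.drop (p + 1) = List.replicate (l.length - p - 1) 0 := by
    rw [List.eq_replicate_iff]
    refine ⟨by simp [List.length_drop]; omega, ?_⟩
    intro x hx
    obtain ⟨q, hq⟩ := List.mem_iff_get?.1 hx
    rw [List.get?_drop] at hq
    exact hz _ _ (by omega) hq
  conv_lhs => rw [decomp h]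
  rw [hrep]

/-- generation data of the leaves -/
def ℓF (τ : Finset (List ℕ)) {k : ℕ} (hcard : (leavesOf τ).card = k) : ℕ → ℕ :=
  extF fun j => (leafVec τ hcard j).length

/-- branching data of the leaves -/
def bF (τ : Finset (List ℕ)) {k : ℕ} (hcard : (leavesOf τ).card = k) : ℕ → ℕ :=
  extF fun j : Fin (k - 1) =>
    commonPrefixLen (leafVec τ hcard ⟨j.1, lt_of_lt_of_le j.2 (Nat.sub_le k 1)⟩)
      (leafVec τ hcard ⟨j.1 + 1, by have := j.2; omega⟩)

section Recon

variable {τ : Finset (List ℕ)} (hτ : IsPlanarTree τ) {k : ℕ}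
  (hcard : (leavesOf τ).card = k) (hk : 1 ≤ k)

include hτ hk

lemma HF : ∀ i, i + 1 < k → bF τ hcard i < ℓF τ hcard i ∧ bF τ hcard i < ℓF τ hcard (i + 1) := by
  intro i hi
  obtain ⟨a, c, hmu, hmw, _, _, _⟩ := leaf_consec hτ hcard hi
  have h1 : i < k - 1 := by omega
  have h2 : i < k := by omega
  unfold bF ℓF extF
  rw [dif_pos h1, dif_pos h2, dif_pos hi]
  exact ⟨hmu, hmw⟩

lemma bL_eq_leafVec : ∀ i (hi : i < k),
    bL (ℓF τ hcard) (bF τ hcard) i = leafVec τ hcard ⟨i, hi⟩ := by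
  intro i
  induction i with
  | zero =>
    intro hi
    have hzero : ∀ p e, (leafVec τ hcard ⟨0, hi⟩).get? p = some e → e = 0 := by
      intro p e hpe
      by_contra hne
      obtain ⟨c, rfl⟩ : ∃ c, e = c + 1 := ⟨e - 1, by omega⟩
      have hp : p < (leafVec τ hcard ⟨0, hi⟩).length := (List.get?_eq_some.1 hpe).1
      set v0 := leafVec τ hcard ⟨0, hi⟩ with hv0
      set u := v0.take p with hu
      have hul : u.length = p := by simp [hu, List.length_take]; omega
      have hpre1 : u ++ [c + 1] <+: v0 :=
        append_singleton_prefix.2 ⟨by rw [hul], by rw [hul]; exact hpe⟩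
      have hmem1 : u ++ [c + 1] ∈ τ :=
        hτ.2.1 _ _ hpre1 (mem_of_leaf (leafVec_mem τ hcard _))
      have hmem2 : u ++ [0] ∈ τ := child_down hτ (Nat.zero_le _) hmem1
      obtain ⟨w, hwleaf, hwpre⟩ := exists_leaf' hmem2
      have htw : w.take p = u := by
        rw [take_of_prefix hwpre (by simp [hul])]
        rw [List.take_append, hul]
        simp [hul]
      have hgw : w.get? p = some 0 := by
        rw [get?_of_prefix hwpre (by simp [hul])]
        rw [List.get?_append_right (by omega), hul]
        simp
      have hwlt : w < v0 := lt_of_diverge (htw.trans hu.symm ▸ rfl) hgw hpe (by omega)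
      exact absurd (leafVec_min τ hcard (by omega) hwleaf) (not_le.2 hwlt)
    have hrep : leafVec τ hcard ⟨0, hi⟩ =
        List.replicate (leafVec τ hcard ⟨0, hi⟩).length 0 := by
      rw [List.eq_replicate_iff]
      refine ⟨rfl, fun x hx => ?_⟩
      obtain ⟨q, hq⟩ := List.mem_iff_get?.1 hx
      exact hzero q x hq
    rw [bL]
    have h0 : ℓF τ hcard 0 = (leafVec τ hcard ⟨0, hi⟩).length := by
      unfold ℓF extF; rw [dif_pos hi]
    rw [h0, ← hrep]
  | succ i ih =>
    intro hi
    have hik : i < k := by omega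
    have IH := ih hik
    obtain ⟨a, c, hmu, hmw, ha, hc, hac⟩ := leaf_consec hτ hcard hi
    set vi := leafVec τ hcard ⟨i, by omega⟩ with hvi
    set vi1 := leafVec τ hcard ⟨i + 1, hi⟩ with hvi1
    set m := commonPrefixLen vi vi1 with hm
    have htkm : vi.take m = vi1.take m := take_cpl vi vi1
    -- step 1 : c = a + 1
    have hc1 : c = a + 1 := by
      by_contra hne
      have hlt : a + 1 < c := by omega
      set u := vi1.take m with hu
      have hul : u.length = m := by simp [hu, List.length_take]; omega
      have hpre1 : u ++ [c] <+: vi1 :=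
        append_singleton_prefix.2 ⟨by rw [hul], by rw [hul]; exact hc⟩
      have hmem1 : u ++ [c] ∈ τ :=
        hτ.2.1 _ _ hpre1 (mem_of_leaf (leafVec_mem τ hcard _))
      have hmem2 : u ++ [a + 1] ∈ τ := child_down hτ (by omega) hmem1
      obtain ⟨w, hwleaf, hwpre⟩ := exists_leaf' hmem2
      have htw : w.take m = u := by
        rw [take_of_prefix hwpre (by simp [hul])]
        rw [List.take_append, hul]
        simp [hul]
      have hgw : w.get? m = some (a + 1) := by
        rw [get?_of_prefix hwpre (by simp [hul])]
        rw [List.get?_append_right (by omega), hul]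
        simp
      have hw1 : vi < w := lt_of_diverge (htkm.trans htw.symm) ha hgw (by omega)
      have hw2 : w < vi1 := lt_of_diverge htw hgw hc hlt
      exact absurd (leafVec_between τ hcard hi hwleaf hw1) (not_le.2 hw2)
    -- step 2 : everything after position m in vi1 is 0
    have htail : ∀ q e, m < q → vi1.get? q = some e → e = 0 := by
      intro q e hq hqe
      by_contra hne
      obtain ⟨c', rfl⟩ : ∃ c', e = c' + 1 := ⟨e - 1, by omega⟩
      have hql : q < vi1.length := (List.get?_eq_some.1 hqe).1
      set u' := vi1.take q with hu'
      have hul' : u'.length = q := by simp [hu', List.length_take]; omega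
      have hpre1 : u' ++ [c' + 1] <+: vi1 :=
        append_singleton_prefix.2 ⟨by rw [hul'], by rw [hul']; exact hqe⟩
      have hmem2 : u' ++ [0] ∈ τ := child_down hτ (Nat.zero_le _)
        (hτ.2.1 _ _ hpre1 (mem_of_leaf (leafVec_mem τ hcard _)))
      obtain ⟨w, hwleaf, hwpre⟩ := exists_leaf' hmem2
      have hu'w : u' <+: w := (List.prefix_append u' [0]).trans hwpre
      have htw : w.take q = u' := by
        rw [take_of_prefix hwpre (by simp [hul'])]
        rw [List.take_append, hul']
        simp [hul']
      have hgw : w.get? q = some 0 := by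
        rw [get?_of_prefix hwpre (by simp [hul'])]
        rw [List.get?_append_right (by omega), hul']
        simp
      have hw2 : w < vi1 := lt_of_diverge htw hgw hqe (by omega)
      have htwm : w.take m = vi.take m := by
        rw [take_of_prefix hu'w (by omega), hu', List.take_take,
          min_eq_left (by omega : m ≤ q), htkm]
      have hgwm : w.get? m = some c := by
        rw [get?_of_prefix hu'w (by omega), hu', List.get?_take (by omega)]
        exact hc
      have hw1 : vi < w := lt_of_diverge htwm.symm ha hgwm hac
      exact absurd (leafVec_between τ hcard hi hwleaf hw1) (not_le.2 hw2)
    -- step 3 : assemble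
    have hrec : vi1 = vi1.take m ++ c :: List.replicate (vi1.length - m - 1) 0 :=
      reconstruct _ m c hc htail
    have hbf : bF τ hcard i = m := by
      unfold bF extF
      rw [dif_pos (by omega : i < k - 1)]
    have hlf : ℓF τ hcard (i + 1) = vi1.length := by
      unfold ℓF extF
      rw [dif_pos hi]
    have hgetD : vi.getD m 0 = a := by
      rw [List.getD_eq_get?, ha]; rfl
    rw [bL, IH, hbf, hlf, hgetD]
    rw [hc1] at hrec
    rw [htkm]
    exact hrec.symm

end Recon

/-! ### Assembly -/

lemma bT_eq {τ : Finset (List ℕ)} (hτ : IsPlanarTree τ) {k : ℕ}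
    (hcard : (leavesOf τ).card = k) (hk : 1 ≤ k) :
    bT (ℓF τ hcard) (bF τ hcard) k = τ := by
  ext w
  rw [mem_bT]
  constructor
  · rintro ⟨i, hi, hpre⟩
    rw [bL_eq_leafVec hτ hcard hk i hi] at hpre
    exact hτ.2.1 _ _ hpre (mem_of_leaf (leafVec_mem τ hcard _))
  · intro hw
    obtain ⟨u, hu, hpre⟩ := exists_leaf' hw
    obtain ⟨j, rfl⟩ := leafVec_surj τ hcard hu
    exact ⟨j.1, j.2, by rw [bL_eq_leafVec hτ hcard hk j.1 j.2]; exact hpre⟩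

lemma cpl_bL {ℓ b : ℕ → ℕ} {k : ℕ}
    (H : ∀ i, i + 1 < k → b i < ℓ i ∧ b i < ℓ (i + 1)) (i : ℕ) (hi : i + 1 < k) :
    commonPrefixLen (bL ℓ b i) (bL ℓ b (i + 1)) = b i := by
  have hb := (H i hi).1
  have hlen := bL_length H i (by omega)
  have hlt : b i < (bL ℓ b i).length := by omega
  have hget : (bL ℓ b i).get? (b i) = some ((bL ℓ b i).getD (b i) 0) := by
    rw [List.get?_eq_get hlt, List.getD_eq_get?, List.get?_eq_get hlt]
    rfl
  apply cpl_eq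
  · exact (bL_take_succ H i hi).symm
  · rw [hget, bL_get?_branch H i hi]
    intro h
    injection h with h
    omega
  · exact ⟨_, hget⟩

def TSpace (k : ℕ) := {τ : Finset (List ℕ) // IsPlanarTree τ ∧ (leavesOf τ).card = k}

def PSpace (k : ℕ) := {p : (Fin k → ℕ) × (Fin (k - 1) → ℕ) //
  ∀ i : Fin (k - 1),
    p.2 i < min (p.1 ⟨i.1, lt_of_lt_of_le i.2 (Nat.sub_le k 1)⟩)
      (p.1 ⟨i.1 + 1, by have := i.2; omega⟩)}

def Φ (k : ℕ) : TSpace k → PSpace k := fun τ =>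
  ⟨(fun i => (leafVec τ.1 τ.2.2 i).length,
    fun i => commonPrefixLen
      (leafVec τ.1 τ.2.2 ⟨i.1, lt_of_lt_of_le i.2 (Nat.sub_le k 1)⟩)
      (leafVec τ.1 τ.2.2 ⟨i.1 + 1, by have := i.2; omega⟩)),
   by
    intro i
    obtain ⟨a, c, hmu, hmw, _, _, _⟩ :=
      leaf_consec τ.2.1 τ.2.2 (show i.1 + 1 < k by have := i.2; omega)
    exact lt_min hmu hmw⟩

lemma HP {k : ℕ} (p : PSpace k) :
    ∀ i, i + 1 < k → extF p.1.2 i < extF p.1.1 i ∧ extF p.1.2 i < extF p.1.1 (i + 1) := by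
  intro i hi
  have h1 : i < k - 1 := by omega
  have h2 := p.2 ⟨i, h1⟩
  rw [lt_min_iff] at h2
  unfold extF
  rw [dif_pos h1, dif_pos (by omega : i < k), dif_pos hi]
  exact h2

def Ψ (k : ℕ) (hk : 1 ≤ k) : PSpace k → TSpace k := fun p =>
  ⟨bT (extF p.1.1) (extF p.1.2) k, bT_planar (HP p) hk, card_leaves_bT (HP p)⟩

lemma left_inv (k : ℕ) (hk : 1 ≤ k) : Function.LeftInverse (Ψ k hk) (Φ k) := by
  intro τ
  apply Subtype.ext
  show bT _ _ k = τ.1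
  exact bT_eq τ.2.1 τ.2.2 hk

lemma right_inv (k : ℕ) (hk : 1 ≤ k) : Function.RightInverse (Ψ k hk) (Φ k) := by
  intro p
  apply Subtype.ext
  have H := HP p
  refine Prod.ext (funext fun i => ?_) (funext fun i => ?_)
  · show (leafVec (bT (extF p.1.1) (extF p.1.2) k) (card_leaves_bT (HP p)) i).length
        = p.1.1 i
    rw [leafVec_bT H _ i, bL_length H i.1 i.2]
    unfold extF
    rw [dif_pos i.2]
  · have hi : i.1 + 1 < k := by have := i.2; omega
    show commonPrefixLen
        (leafVec (bT (extF p.1.1) (extF p.1.2) k) (card_leaves_bT (HP p)) ⟨i.1, by omega⟩)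
        (leafVec (bT (extF p.1.1) (extF p.1.2) k) (card_leaves_bT (HP p)) ⟨i.1 + 1, hi⟩)
        = p.1.2 i
    rw [leafVec_bT H _ _, leafVec_bT H _ _]
    show commonPrefixLen (bL (extF p.1.1) (extF p.1.2) i.1)
        (bL (extF p.1.1) (extF p.1.2) (i.1 + 1)) = p.1.2 i
    rw [cpl_bL H i.1 hi]
    unfold extF
    rw [dif_pos i.2]

end PT

/-- **Point process encoding of planar trees.** The map sending a planar tree with
`k` leaves `v₁ < … < v_k` to the vectors `ℓᵢ = |vᵢ|` of leaf generations and
`bᵢ = |vᵢ ∧ vᵢ₊₁|` of generations of MRCAs of consecutive leaves is a bijection onto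
`{(ℓ, b) ∈ ℕᵏ × ℕ^{k-1} : bᵢ < min (ℓᵢ, ℓᵢ₊₁)}`. -/
theorem planar_tree_point_process_bijection (k : ℕ) (hk : 1 ≤ k) :
    ∃ e : {τ : Finset (List ℕ) // IsPlanarTree τ ∧ (leavesOf τ).card = k} ≃
        {p : (Fin k → ℕ) × (Fin (k - 1) → ℕ) //
          ∀ i : Fin (k - 1),
            p.2 i < min (p.1 ⟨i.1, lt_of_lt_of_le i.2 (Nat.sub_le k 1)⟩)
              (p.1 ⟨i.1 + 1, by have := i.2; omega⟩)},
      ∀ τ : {τ : Finset (List ℕ) // IsPlanarTree τ ∧ (leavesOf τ).card = k},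
        (∀ i : Fin k, (e τ).1.1 i = (leafVec τ.1 τ.2.2 i).length) ∧
        (∀ i : Fin (k - 1),
          (e τ).1.2 i =
            commonPrefixLen
              (leafVec τ.1 τ.2.2 ⟨i.1, lt_of_lt_of_le i.2 (Nat.sub_le k 1)⟩)
              (leafVec τ.1 τ.2.2 ⟨i.1 + 1, by have := i.2; omega⟩)) := by
  exact ⟨⟨PT.Φ k, PT.Ψ k hk, PT.left_inv k hk, PT.right_inv k hk⟩,
    fun τ => ⟨fun i => rfl, fun i => rfl⟩⟩

end
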